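/- Converse to the Riesz lower bound: if there exists a constant c > 0 such that ‖ ∑_{n∈ℤ} a_n (ξ_n − σ) ‖_{L²(ℙ)} ≥ c (∑_{n∈ℤ} |a_n|²)^{1/2} for every finitely supported complex sequence (a_n)_{n∈ℤ}, then f is not m-a.e. equal to an indicator function, i.e. ∫_𝕋 f(1−f) dm > 0. -/

import Mathlib

open MeasureTheory Complex Filter Finset
open scoped ENNReal

noncomputable def fhat (f : AddCircle (1:ℝ) → ℝ) (k : ℤ) : ℂ :=
  fourierCoeff (fun t => (f t : ℂ)) k
/-- Converse to the Riesz lower bound: a uniform L² lower bound forces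
∫ f(1−f) dm > 0, i.e. f is not a.e. an indicator function. -/
theorem stmt_12
    (f : AddCircle (1:ℝ) → ℝ) (hf_meas : Measurable f)
    (hf01 : ∀ t, f t ∈ Set.Icc (0:ℝ) 1)
    (σ : ℝ) (hσ : σ = ∫ t, f t ∂AddCircle.haarAddCircle)
    (hσ0 : 0 < σ) (hσ1 : σ < 1)
    {Ω : Type*} [MeasurableSpace Ω] (P : Measure Ω) [IsProbabilityMeasure P]
    (ξ : ℤ → Ω → ℝ) (hξ_meas : ∀ n, Measurable (ξ n))
    (hξ01 : ∀ n ω, ξ n ω = 0 ∨ ξ n ω = 1)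
    (hDPP : ∀ (k : ℕ) (n : Fin k → ℤ), Function.Injective n →
      ((∫ ω, ∏ i, ξ (n i) ω ∂P : ℝ) : ℂ) =
        Matrix.det (Matrix.of fun i j => fhat f (n i - n j)))
    (h : ∃ c : ℝ, 0 < c ∧ ∀ a : ℤ →₀ ℂ,
      ENNReal.ofReal (c * Real.sqrt (∑ n ∈ a.support, ‖a n‖^2)) ≤
        eLpNorm (fun ω => ∑ n ∈ a.support, a n * ((ξ n ω : ℂ) - (σ:ℂ))) 2 P) :
    0 < ∫ t, f t * (1 - f t) ∂AddCircle.haarAddCircle := by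
  -- Fourier coefficient facts
  have hfhat0 : fhat f 0 = (σ : ℂ) := by
    rw [hσ]
    simp only [fhat, fourierCoeff, neg_zero, fourier_zero, one_smul]
    exact integral_ofReal
  have hconj : ∀ k : ℤ, fhat f (-k) = starRingEnd ℂ (fhat f k) := by
    intro k
    rw [fhat, fhat, fourierCoeff, fourierCoeff, ← integral_conj]
    congr 1; funext t
    rw [smul_eq_mul, smul_eq_mul, map_mul, Complex.conj_ofReal, ← fourier_neg, neg_neg]
  have hmean : ∀ n : ℤ, ∫ ω, ξ n ω ∂P = σ := by
    intro n
    have h1 := hDPP 1 (fun _ => n) (Function.injective_of_subsingleton _)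
    simp only [Fin.prod_univ_one, Matrix.det_fin_one, Matrix.of_apply, sub_self, hfhat0] at h1
    exact_mod_cast h1
  have hsec : ∀ n m : ℤ, n ≠ m → ∫ ω, ξ n ω * ξ m ω ∂P = σ^2 - ‖fhat f (n - m)‖^2 := by
    intro n m hnm
    have h2 := hDPP 2 ![n, m] (by intro i j hij; fin_cases i <;> fin_cases j <;> simp_all)
    rw [Matrix.det_fin_two] at h2
    simp only [Fin.prod_univ_two, Matrix.of_apply, Matrix.cons_val_zero, Matrix.cons_val_one,
      Matrix.head_cons, sub_self, hfhat0] at h2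
    rw [show (m - n) = -(n - m) by ring, hconj, Complex.mul_conj] at h2
    have : ((∫ ω, ξ n ω * ξ m ω ∂P : ℝ) : ℂ) = ((σ^2 - ‖fhat f (n - m)‖^2 : ℝ) : ℂ) := by
      rw [h2]; push_cast
      rw [Complex.normSq_eq_norm_sq]
      push_cast
      ring
    exact_mod_cast this
  -- boundedness and integrability
  have hxb : ∀ n ω, |ξ n ω - σ| ≤ 1 := by
    intro n ω; rcases hξ01 n ω with h'|h' <;> rw [h'] <;> rw [abs_le] <;> constructor <;> linarith
  have hxb1 : ∀ n ω, |ξ n ω| ≤ 1 := by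
    intro n ω; rcases hξ01 n ω with h'|h' <;> rw [h'] <;> norm_num
  have hInt1 : ∀ n : ℤ, Integrable (ξ n) P := fun n =>
    (integrable_const (1:ℝ)).mono' (hξ_meas n).aestronglyMeasurable
      (ae_of_all _ fun ω => by rw [Real.norm_eq_abs]; exact hxb1 n ω)
  have hIntP : ∀ n m : ℤ, Integrable (fun ω => ξ n ω * ξ m ω) P := fun n m =>
    (integrable_const (1:ℝ)).mono' ((hξ_meas n).mul (hξ_meas m)).aestronglyMeasurable
      (ae_of_all _ fun ω => by
        rw [Real.norm_eq_abs, abs_mul]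
        exact mul_le_one₀ (hxb1 n ω) (abs_nonneg _) (hxb1 m ω))
  have hInt2 : ∀ n m : ℤ, Integrable (fun ω => (ξ n ω - σ) * (ξ m ω - σ)) P := fun n m =>
    (integrable_const (1:ℝ)).mono'
      (((hξ_meas n).sub measurable_const).mul ((hξ_meas m).sub measurable_const)).aestronglyMeasurable
      (ae_of_all _ fun ω => by
        rw [Real.norm_eq_abs, abs_mul]
        exact mul_le_one₀ (hxb n ω) (abs_nonneg _) (hxb m ω))
  -- covariance
  have hcov : ∀ n m : ℤ, ∫ ω, (ξ n ω - σ) * (ξ m ω - σ) ∂P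
      = (if n = m then σ else 0) - ‖fhat f (n - m)‖^2 := by
    intro n m
    have expand : (fun ω => (ξ n ω - σ) * (ξ m ω - σ))
        = fun ω => (ξ n ω * ξ m ω - σ * ξ n ω) - (σ * ξ m ω - σ^2) := by
      funext ω; ring
    have A : Integrable (fun ω => ξ n ω * ξ m ω - σ * ξ n ω) P :=
      (hIntP n m).sub ((hInt1 n).const_mul σ)
    have B : Integrable (fun ω => σ * ξ m ω - σ^2) P :=
      ((hInt1 m).const_mul σ).sub (integrable_const _)
    have C : Integrable (fun ω => σ * ξ n ω) P := (hInt1 n).const_mul σ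
    have D : Integrable (fun ω => σ * ξ m ω) P := (hInt1 m).const_mul σ
    rw [expand, integral_sub A B, integral_sub (hIntP n m) C,
      integral_sub D (integrable_const _),
      integral_const_mul, integral_const_mul, hmean, hmean, integral_const]
    simp only [probReal_univ, ENNReal.toReal_one, one_smul]
    by_cases hnm : n = m
    · subst hnm
      have : (fun ω => ξ n ω * ξ n ω) = ξ n := by
        funext ω; rcases hξ01 n ω with h'|h' <;> rw [h'] <;> ring
      rw [this, hmean, if_pos rfl, sub_self, hfhat0]
      have : ‖((σ:ℝ) : ℂ)‖^2 = σ^2 := by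
        rw [Complex.norm_real, Real.norm_eq_abs]; exact sq_abs σ
      rw [this]; ring
    · rw [hsec n m hnm, if_neg hnm]; ring
  -- variance formula
  have hvar : ∀ s : Finset ℤ, ∫ ω, (∑ n ∈ s, (ξ n ω - σ))^2 ∂P
      = σ * s.card - ∑ n ∈ s, ∑ m ∈ s, ‖fhat f (n - m)‖^2 := by
    intro s
    have e1 : (fun ω => (∑ n ∈ s, (ξ n ω - σ))^2)
        = fun ω => ∑ n ∈ s, ∑ m ∈ s, (ξ n ω - σ) * (ξ m ω - σ) := by
      funext ω; rw [sq, Finset.sum_mul_sum]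
    rw [e1, integral_finset_sum s (fun n _ => integrable_finset_sum s (fun m _ => hInt2 n m))]
    have e2 : ∀ n ∈ s, ∫ ω, ∑ m ∈ s, (ξ n ω - σ) * (ξ m ω - σ) ∂P
        = ∑ m ∈ s, ((if n = m then σ else 0) - ‖fhat f (n - m)‖^2) := by
      intro n _
      rw [integral_finset_sum s (fun m _ => hInt2 n m)]
      exact Finset.sum_congr rfl fun m _ => hcov n m
    rw [Finset.sum_congr rfl e2]
    rw [Finset.sum_congr rfl (fun n _ => Finset.sum_sub_distrib _ _), Finset.sum_sub_distrib]
    congr 1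
    have : ∀ n ∈ s, ∑ m ∈ s, (if n = m then σ else 0) = σ := by
      intro n hn; rw [Finset.sum_ite_eq s n (fun _ => σ), if_pos hn]
    rw [Finset.sum_congr rfl this, Finset.sum_const, nsmul_eq_mul, mul_comm]
  -- suppose not: then ∫ f(1-f) = 0
  by_contra hcon
  push_neg at hcon
  have hnn : 0 ≤ ∫ t, f t * (1 - f t) ∂AddCircle.haarAddCircle :=
    integral_nonneg fun t => mul_nonneg (hf01 t).1 (by linarith [(hf01 t).2])
  have hzero : ∫ t, f t * (1 - f t) ∂AddCircle.haarAddCircle = 0 := le_antisymm hcon hnn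
  -- Parseval: ∑' ‖fhat f k‖² = σ
  have htsum : ∑' k : ℤ, ‖fhat f k‖^2 = σ := by
    have hbd : ∀ t, ‖(f t : ℂ)‖ ≤ 1 := by
      intro t
      rw [Complex.norm_real, Real.norm_eq_abs, abs_le]
      exact ⟨by linarith [(hf01 t).1], (hf01 t).2⟩
    have hfc : MemLp (fun t => (f t : ℂ)) 2 (AddCircle.haarAddCircle) :=
      MemLp.of_bound (Complex.measurable_ofReal.comp hf_meas).aestronglyMeasurable 1
        (ae_of_all _ hbd)
    set F := hfc.toLp _ with hF
    have hae : ⇑F =ᵐ[AddCircle.haarAddCircle] fun t => (f t : ℂ) := hfc.coeFn_toLp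
    have hcoeff : ∀ k : ℤ, fourierCoeff (⇑F) k = fhat f k := by
      intro k
      rw [fourierCoeff, fhat, fourierCoeff]
      exact integral_congr_ae (hae.mono fun t ht => by simp only [ht])
    have hpars := tsum_sq_fourierCoeff F
    have hI2 : ∫ t, ‖(⇑F) t‖^2 ∂AddCircle.haarAddCircle
        = ∫ t, f t * f t ∂AddCircle.haarAddCircle := by
      refine integral_congr_ae (hae.mono fun t ht => ?_)
      simp only [ht]
      rw [Complex.norm_real, Real.norm_eq_abs, _root_.sq_abs (f t), sq]
    have hIf : Integrable f AddCircle.haarAddCircle :=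
      (integrable_const (1:ℝ)).mono' hf_meas.aestronglyMeasurable
        (ae_of_all _ fun t => by
          rw [Real.norm_eq_abs, abs_le]; exact ⟨by linarith [(hf01 t).1], (hf01 t).2⟩)
    have hIff : Integrable (fun t => f t * f t) AddCircle.haarAddCircle :=
      (integrable_const (1:ℝ)).mono' (hf_meas.mul hf_meas).aestronglyMeasurable
        (ae_of_all _ fun t => by
          rw [Real.norm_eq_abs, abs_mul]
          have h1 := (hf01 t).1; have h2 := (hf01 t).2
          rw [_root_.abs_of_nonneg h1]
          nlinarith)
    have hsplit : ∫ t, f t * (1 - f t) ∂AddCircle.haarAddCircle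
        = (∫ t, f t ∂AddCircle.haarAddCircle) - ∫ t, f t * f t ∂AddCircle.haarAddCircle := by
      rw [← integral_sub hIf hIff]
      exact integral_congr_ae (ae_of_all _ fun t => by ring)
    have hff : ∫ t, f t * f t ∂AddCircle.haarAddCircle = σ := by
      rw [hσ]; linarith [hsplit, hzero]
    calc ∑' k : ℤ, ‖fhat f k‖^2 = ∑' k : ℤ, ‖fourierCoeff (⇑F) k‖^2 := by simp_rw [hcoeff]
    _ = ∫ t, ‖(⇑F) t‖^2 ∂AddCircle.haarAddCircle := hpars
    _ = ∫ t, f t * f t ∂AddCircle.haarAddCircle := hI2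
    _ = σ := hff
  obtain ⟨c, hc, hC⟩ := h
  -- key inequality from the lower bound hypothesis
  have key : ∀ N : ℕ, c^2 * (2*N+1) ≤
      σ * (2*N+1) - ∑ n ∈ Finset.Icc (-(N:ℤ)) N, ∑ m ∈ Finset.Icc (-(N:ℤ)) N,
        ‖fhat f (n - m)‖^2 := by
    intro N
    set I : Finset ℤ := Finset.Icc (-(N:ℤ)) N with hI
    have hcard : (I.card : ℝ) = 2*N+1 := by
      rw [hI, Int.card_Icc]
      have : ((N:ℤ) + 1 - -(N:ℤ)).toNat = 2*N+1 := by omega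
      rw [this]; push_cast; ring
    set a : ℤ →₀ ℂ := ⟨I, fun n => if n ∈ I then 1 else 0,
      by intro x; by_cases hx : x ∈ I <;> simp [hx]⟩ with ha
    have hsupp : a.support = I := rfl
    have happ : ∀ n ∈ I, a n = 1 := fun n hn => if_pos hn
    have h1 := hC a
    set H : Ω → ℝ := fun ω => ∑ n ∈ I, (ξ n ω - σ) with hH
    have hGeq : (fun ω => ∑ n ∈ a.support, a n * ((ξ n ω : ℂ) - (σ:ℂ)))
        = fun ω => ((H ω : ℝ) : ℂ) := by
      funext ω
      rw [hsupp, hH]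
      push_cast
      exact Finset.sum_congr rfl fun n hn => by rw [happ n hn, one_mul]
    have hH_meas : Measurable H :=
      Finset.measurable_sum _ (fun n _ => (hξ_meas n).sub measurable_const)
    have hHb : ∀ ω, |H ω| ≤ (I.card : ℝ) := by
      intro ω
      calc |H ω| ≤ ∑ n ∈ I, |ξ n ω - σ| := Finset.abs_sum_le_sum_abs _ _
      _ ≤ ∑ n ∈ I, 1 := Finset.sum_le_sum fun n _ => hxb n ω
      _ = I.card := by rw [Finset.sum_const, nsmul_eq_mul, mul_one]
    have hmem : MemLp (fun ω => ((H ω : ℝ) : ℂ)) 2 P :=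
      MemLp.of_bound (Complex.measurable_ofReal.comp hH_meas).aestronglyMeasurable (I.card : ℝ)
        (ae_of_all _ fun ω => by rw [Complex.norm_real, Real.norm_eq_abs]; exact hHb ω)
    rw [hGeq, hmem.eLpNorm_eq_integral_rpow_norm two_ne_zero ENNReal.ofNat_ne_top] at h1
    have hsum1 : ∑ n ∈ a.support, ‖a n‖^2 = (I.card : ℝ) := by
      rw [hsupp, Finset.sum_congr rfl (fun n hn => by rw [happ n hn])]
      simp
    rw [hsum1] at h1
    have htr : (2 : ℝ≥0∞).toReal = 2 := by simp
    rw [htr] at h1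
    have hptw : (fun ω => ‖((H ω : ℝ) : ℂ)‖ ^ (2:ℝ)) = fun ω => (H ω)^2 := by
      funext ω
      rw [Complex.norm_real, Real.norm_eq_abs, show (2:ℝ) = ((2:ℕ):ℝ) by norm_num,
        Real.rpow_natCast]
      exact _root_.sq_abs (H ω)
    rw [show (∫ ω, ‖((H ω : ℝ) : ℂ)‖ ^ (2:ℝ) ∂P) = ∫ ω, (H ω)^2 ∂P from by rw [hptw]] at h1
    set V : ℝ := ∫ ω, (H ω)^2 ∂P with hV
    have hV0 : 0 ≤ V := integral_nonneg fun ω => sq_nonneg _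
    have h2 : c * Real.sqrt (I.card : ℝ) ≤ V ^ (2⁻¹ : ℝ) := by
      rw [ENNReal.ofReal_le_ofReal_iff (Real.rpow_nonneg hV0 _)] at h1
      exact h1
    have h3 : c^2 * (I.card : ℝ) ≤ V := by
      have hl : 0 ≤ c * Real.sqrt (I.card : ℝ) :=
        mul_nonneg hc.le (Real.sqrt_nonneg _)
      have hVpow : (V ^ (2⁻¹:ℝ))^2 = V := by
        rw [← Real.rpow_natCast (V ^ (2⁻¹:ℝ)) 2, ← Real.rpow_mul hV0]
        norm_num
      have hsq : Real.sqrt (I.card:ℝ) ^ 2 = (I.card:ℝ) := Real.sq_sqrt (Nat.cast_nonneg _)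
      calc c^2 * (I.card : ℝ) = (c * Real.sqrt (I.card:ℝ))^2 := by rw [mul_pow, hsq]
      _ ≤ (V ^ (2⁻¹:ℝ))^2 := pow_le_pow_left₀ hl h2 2
      _ = V := hVpow
    rw [hV, hvar I, hcard] at h3
    exact h3
  -- counting lower bound for the double sum
  have count : ∀ M N : ℕ, M ≤ N →
      ((2*(N-M)+1 : ℕ):ℝ) * ∑ k ∈ Finset.Icc (-(M:ℤ)) M, ‖fhat f k‖^2
        ≤ ∑ n ∈ Finset.Icc (-(N:ℤ)) N, ∑ m ∈ Finset.Icc (-(N:ℤ)) N, ‖fhat f (n - m)‖^2 := by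
    intro M N hMN
    set I : Finset ℤ := Finset.Icc (-(N:ℤ)) N
    set J : Finset ℤ := Finset.Icc (-(M:ℤ)) M
    set K : Finset ℤ := Finset.Icc (-((N:ℤ)-M)) ((N:ℤ)-M) with hK
    have hg : ∀ k : ℤ, (0:ℝ) ≤ ‖fhat f k‖^2 := fun k => sq_nonneg _
    have hcardK : K.card = 2*(N-M)+1 := by
      rw [hK, Int.card_Icc]; omega
    have hsub : (J ×ˢ K).map ⟨fun p => (p.2 + p.1, p.2), by
        intro p q hpq
        simp only [Prod.mk.injEq] at hpq
        obtain ⟨h1, h2⟩ := hpq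
        exact Prod.ext (by omega) h2⟩ ⊆ I ×ˢ I := by
      intro p hp
      simp only [Finset.mem_map, Finset.mem_product, Function.Embedding.coeFn_mk] at hp
      obtain ⟨q, ⟨hq1, hq2⟩, rfl⟩ := hp
      simp only [Finset.mem_product, Finset.mem_Icc] at *
      simp only [I, Finset.mem_Icc]
      simp only [J, Finset.mem_Icc] at hq1
      simp only [K, Finset.mem_Icc] at hq2
      show (-(N:ℤ) ≤ q.2 + q.1 ∧ q.2 + q.1 ≤ N) ∧ (-(N:ℤ) ≤ q.2 ∧ q.2 ≤ N)
      constructor <;> constructor <;> omega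
    calc ((2*(N-M)+1 : ℕ):ℝ) * ∑ k ∈ J, ‖fhat f k‖^2
        = ∑ q ∈ J ×ˢ K, ‖fhat f q.1‖^2 := by
          have : ∑ q ∈ J ×ˢ K, ‖fhat f q.1‖^2
              = ((2*(N-M)+1:ℕ):ℝ) * ∑ k ∈ J, ‖fhat f k‖^2 := by
            rw [Finset.sum_product]
            simp only [Finset.sum_const, nsmul_eq_mul]
            rw [← Finset.mul_sum, hcardK]
          exact this.symm
      _ = ∑ p ∈ (J ×ˢ K).map ⟨fun p => (p.2 + p.1, p.2), by
            intro p q hpq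
            simp only [Prod.mk.injEq] at hpq
            obtain ⟨h1, h2⟩ := hpq
            exact Prod.ext (by omega) h2⟩, ‖fhat f (p.1 - p.2)‖^2 := by
          rw [Finset.sum_map]
          exact Finset.sum_congr rfl fun q _ => by show _ = ‖fhat f ((q.2 + q.1) - q.2)‖^2; simp
      _ ≤ ∑ p ∈ I ×ˢ I, ‖fhat f (p.1 - p.2)‖^2 :=
          Finset.sum_le_sum_of_subset_of_nonneg hsub (fun p _ _ => hg _)
      _ = ∑ n ∈ I, ∑ m ∈ I, ‖fhat f (n - m)‖^2 := by rw [Finset.sum_product]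
  -- summability and choice of M
  have hsumm : Summable (fun k : ℤ => ‖fhat f k‖^2) := by
    by_contra hs
    rw [tsum_eq_zero_of_not_summable hs] at htsum
    linarith
  have hHasSum : HasSum (fun k : ℤ => ‖fhat f k‖^2) σ := htsum ▸ hsumm.hasSum
  have hev : ∀ᶠ s in atTop, σ - c^2/2 < ∑ k ∈ s, ‖fhat f k‖^2 :=
    hHasSum.eventually (eventually_gt_nhds (by nlinarith))
  obtain ⟨s₀, hs₀⟩ := hev.exists
  set M : ℕ := s₀.sup (fun k => k.natAbs) with hM
  have hsub : s₀ ⊆ Finset.Icc (-(M:ℤ)) M := by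
    intro k hk
    have h' : k.natAbs ≤ M := Finset.le_sup (f := fun k : ℤ => k.natAbs) hk
    rw [Finset.mem_Icc]
    omega
  set T : ℝ := ∑ k ∈ Finset.Icc (-(M:ℤ)) M, ‖fhat f k‖^2 with hT
  have hT1 : σ - c^2/2 < T :=
    lt_of_lt_of_le hs₀ (Finset.sum_le_sum_of_subset_of_nonneg hsub fun _ _ _ => sq_nonneg _)
  have hT0 : 0 ≤ T := Finset.sum_nonneg fun _ _ => sq_nonneg _
  have hTσ : T ≤ σ := htsum ▸ Summable.sum_le_tsum _ (fun k _ => sq_nonneg _) hsumm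
  -- choose N = M + K large and derive a contradiction
  obtain ⟨K, hK⟩ := exists_nat_gt ((4*(M:ℝ))/c^2)
  have h1 := key (M + K)
  have h2 := count M (M + K) (Nat.le_add_right _ _)
  have hNM : (M + K) - M = K := by omega
  rw [hNM] at h2
  have hcast1 : ((2*K+1 : ℕ):ℝ) = 2*(K:ℝ)+1 := by push_cast; ring
  have hcast2 : ((M + K : ℕ):ℝ) = (M:ℝ) + K := by push_cast; ring
  rw [hcast1] at h2
  rw [hcast2] at h1
  have h4M : 4*(M:ℝ) < c^2 * K := by
    rw [div_lt_iff₀ (by positivity)] at hK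
    linarith [hK]
  have hMr : (0:ℝ) ≤ (M:ℝ) := Nat.cast_nonneg M
  have hKr : (0:ℝ) ≤ (K:ℝ) := Nat.cast_nonneg K
  have hP : (0:ℝ) ≤ 2*((M:ℝ)+K)+1 := by positivity
  have step : σ*(2*((M:ℝ)+K)+1) ≤ (T + c^2/2)*(2*((M:ℝ)+K)+1) :=
    mul_le_mul_of_nonneg_right (by linarith) hP
  have p1' : (0:ℝ) ≤ (M:ℝ)*(1-T) := mul_nonneg hMr (by linarith)
  linarith [h1, h2, step, p1', h4M, mul_nonneg (sq_nonneg c) hMr,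
    mul_nonneg (sq_nonneg c) hKr, sq_nonneg c, hMr]
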